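/- Let μ, σ, λ ∈ ℂ with μ/2 not a nonpositive integer, let w ∈ ℂ with w² = λ, and set a = −(σ−μ)/4 + iw, b = −(σ−μ)/4 − iw, c = μ/2. Define η₁(x) = sinh(x/2)^{(μ−1)/2}·cosh(x/2)^{−(σ−1)/2}·₂F₁(a,b;c;−sinh²(x/2)) for 0 < x < 2·arsinh(1). Then η₁''(x) + (λ − q(x))·η₁(x) = 0 on this interval, where q(x) = q*(x) − ((σ−μ)/4)². -/

import Mathlib

noncomputable section

/-- The Gauss hypergeometric series `₂F₁(a,b;c;z) = Σ_k (a)_k (b)_k / (k! (c)_k) z^k`. -/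
def hyp (a b c z : ℂ) : ℂ :=
  ∑' k : ℕ, (ascPochhammer ℂ k).eval a * (ascPochhammer ℂ k).eval b /
      ((k.factorial : ℂ) * (ascPochhammer ℂ k).eval c) * z ^ k

/-- `q*(x) = ((μ−1)(μ−3)/16)tanh(x/2)⁻² − (μ(σ−2)+1)/8 + ((σ+1)(σ−1)/16)tanh(x/2)²`. -/
def qstar (σ μ : ℂ) (x : ℝ) : ℂ :=
  ((μ - 1) * (μ - 3) / 16) * (((Real.tanh (x / 2) : ℝ) : ℂ) ^ 2)⁻¹ - (μ * (σ - 2) + 1) / 8 +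
    ((σ + 1) * (σ - 1) / 16) * ((Real.tanh (x / 2) : ℝ) : ℂ) ^ 2

/-- `η₁(x) = sinh(x/2)^{(μ−1)/2} cosh(x/2)^{−(σ−1)/2} ₂F₁(a,b;c;−sinh²(x/2))`. -/
def eta1 (a b c μ σ : ℂ) (x : ℝ) : ℂ :=
  ((Real.sinh (x / 2) : ℝ) : ℂ) ^ ((μ - 1) / 2) *
    ((Real.cosh (x / 2) : ℝ) : ℂ) ^ (-((σ - 1) / 2)) *
    hyp a b c (-((Real.sinh (x / 2) ^ 2 : ℝ) : ℂ))

open Filter Complex Topology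

namespace Stmt17Aux

def D (u : ℕ → ℂ) (n : ℕ) : ℂ := ((n : ℂ) + 1) * u (n + 1)

def co (a b c : ℂ) (n : ℕ) : ℂ :=
  (ascPochhammer ℂ n).eval a * (ascPochhammer ℂ n).eval b /
    ((n.factorial : ℂ) * (ascPochhammer ℂ n).eval c)

lemma asc_ne_zero {c : ℂ} (hc : ∀ k : ℕ, c ≠ -(k : ℂ)) (n : ℕ) :
    (ascPochhammer ℂ n).eval c ≠ 0 := by
  induction n with
  | zero => simp
  | succ n ih =>
    rw [ascPochhammer_succ_eval]
    refine mul_ne_zero ih fun h => hc n ?_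
    linear_combination h

lemma c_add_ne_zero {c : ℂ} (hc : ∀ k : ℕ, c ≠ -(k : ℂ)) (n : ℕ) : c + n ≠ 0 := by
  intro h; exact hc n (by linear_combination h)

def ratio (a b c : ℂ) (n : ℕ) : ℂ := (a + n) * (b + n) / (((n : ℂ) + 1) * (c + n))

lemma co_rec {a b c : ℂ} (hc : ∀ k : ℕ, c ≠ -(k : ℂ)) (n : ℕ) :
    co a b c (n + 1) = co a b c n * ratio a b c n := by
  have h1 := asc_ne_zero hc n
  have h2 := c_add_ne_zero hc n
  have h3 : ((n.factorial : ℂ)) ≠ 0 := Nat.cast_ne_zero.2 n.factorial_ne_zero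
  have h4 : ((n : ℂ) + 1) ≠ 0 := Nat.cast_add_one_ne_zero n
  unfold co ratio
  rw [ascPochhammer_succ_eval, ascPochhammer_succ_eval, ascPochhammer_succ_eval,
    Nat.factorial_succ]
  push_cast
  field_simp


lemma tendsto_inv_natCast_add_one :
    Tendsto (fun n : ℕ => (((n : ℂ) + 1))⁻¹) atTop (nhds 0) := by
  rw [tendsto_zero_iff_norm_tendsto_zero]
  have : (fun n : ℕ => ‖(((n : ℂ) + 1))⁻¹‖) = fun n : ℕ => 1 / ((n : ℝ) + 1) := by
    funext n
    rw [norm_inv, one_div]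
    congr 1
    rw [show ((n : ℂ) + 1) = (((n + 1 : ℕ) : ℝ) : ℂ) by push_cast; ring, Complex.norm_real]
    rw [Real.norm_eq_abs, _root_.abs_of_nonneg (by positivity)]
    push_cast; ring
  rw [this]
  exact tendsto_one_div_add_atTop_nhds_zero_nat

lemma tendsto_inv_add_natCast (c : ℂ) :
    Tendsto (fun n : ℕ => (c + (n : ℂ))⁻¹) atTop (nhds 0) := by
  rw [tendsto_zero_iff_norm_tendsto_zero]
  apply squeeze_zero' (g := fun n : ℕ => ((n : ℝ) - ‖c‖)⁻¹)
  · exact Eventually.of_forall fun n => norm_nonneg _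
  · filter_upwards [eventually_gt_atTop (Nat.ceil (‖c‖ + 1))] with n hn
    have hn' : ‖c‖ + 1 ≤ (n : ℝ) := le_trans (Nat.le_ceil _) (by exact_mod_cast hn.le)
    have h1 : (0:ℝ) < (n : ℝ) - ‖c‖ := by linarith
    have h2 : (n : ℝ) - ‖c‖ ≤ ‖c + (n : ℂ)‖ := by
      have := norm_sub_norm_le ((n : ℂ)) (-c)
      simp only [sub_neg_eq_add, norm_neg] at this
      have hnn : ‖((n : ℕ) : ℂ)‖ = (n : ℝ) := by
        rw [show ((n : ℕ) : ℂ) = (((n : ℕ) : ℝ) : ℂ) by push_cast; ring, Complex.norm_real,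
          Real.norm_eq_abs, _root_.abs_of_nonneg (by positivity)]
      rw [hnn] at this
      have : (n : ℝ) - ‖c‖ ≤ ‖(n : ℂ) + c‖ := by linarith
      rwa [add_comm] at this
    rw [norm_inv]
    exact inv_anti₀ h1 h2
  · exact tendsto_inv_atTop_zero.comp (tendsto_atTop_add_const_right _ (-‖c‖)
      tendsto_natCast_atTop_atTop)

lemma tendsto_ratio {a b c : ℂ} (hc : ∀ k : ℕ, c ≠ -(k : ℂ)) :
    Tendsto (fun n => ratio a b c n) atTop (nhds 1) := by
  have h : ∀ n : ℕ, ratio a b c n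
      = (1 + (a - 1) * ((n : ℂ) + 1)⁻¹) * (1 + (b - c) * (c + (n : ℂ))⁻¹) := by
    intro n
    have h2 := c_add_ne_zero hc n
    have h4 : ((n : ℂ) + 1) ≠ 0 := Nat.cast_add_one_ne_zero n
    unfold ratio
    field_simp
    ring
  rw [show (nhds (1 : ℂ)) = nhds ((1 + (a - 1) * 0) * (1 + (b - c) * 0)) by norm_num]
  exact Tendsto.congr (fun n => (h n).symm)
    (((tendsto_const_nhds.add (tendsto_const_nhds.mul tendsto_inv_natCast_add_one)).mul
      (tendsto_const_nhds.add (tendsto_const_nhds.mul (tendsto_inv_add_natCast c)))))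

lemma summable_geom_aux {v : ℕ → ℂ} {s : ℕ → ℝ}
    (hv : ∀ n, ‖v (n + 1)‖ = s n * ‖v n‖) (hs : Tendsto s atTop (nhds 1))
    {r : ℝ} (hr0 : 0 ≤ r) (hr : r < 1) :
    Summable (fun n => ‖v n‖ * r ^ n) := by
  apply summable_of_ratio_norm_eventually_le (r := (1 + r) / 2) (by linarith)
  have h1 : Tendsto (fun n => s n * r) atTop (nhds r) := by
    simpa using hs.mul_const r
  have h2 : ∀ᶠ n in atTop, s n * r ≤ (1 + r) / 2 :=
    h1.eventually_le_const (by linarith)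
  filter_upwards [h2] with n hn
  rw [Real.norm_eq_abs, Real.norm_eq_abs, _root_.abs_of_nonneg (by positivity),
    _root_.abs_of_nonneg (by positivity)]
  calc ‖v (n + 1)‖ * r ^ (n + 1) = (s n * r) * (‖v n‖ * r ^ n) := by rw [hv]; ring
    _ ≤ ((1 + r) / 2) * (‖v n‖ * r ^ n) := by
        apply mul_le_mul_of_nonneg_right hn (by positivity)


def P (v : ℕ → ℂ) : Prop := ∀ r : ℝ, 0 ≤ r → r < 1 → Summable (fun n => ‖v n‖ * r ^ n)

lemma norm_natCast_add_one (n : ℕ) : ‖((n : ℂ) + 1)‖ = (n : ℝ) + 1 := by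
  rw [show ((n : ℂ) + 1) = (((n + 1 : ℕ) : ℝ) : ℂ) by push_cast; ring, Complex.norm_real,
    Real.norm_eq_abs, _root_.abs_of_nonneg (by positivity)]
  push_cast; ring

lemma D_ratio_step {v : ℕ → ℂ} {t : ℕ → ℝ}
    (hv : ∀ n, ‖v (n + 1)‖ = t n * ‖v n‖) (ht : Tendsto t atTop (nhds 1)) :
    (∀ n, ‖D v (n + 1)‖ = ((((n : ℝ) + 2) / ((n : ℝ) + 1)) * t (n + 1)) * ‖D v n‖) ∧
      Tendsto (fun n : ℕ => (((n : ℝ) + 2) / ((n : ℝ) + 1)) * t (n + 1)) atTop (nhds 1) := by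
  constructor
  · intro n
    have h1 : ‖D v n‖ = ((n : ℝ) + 1) * ‖v (n + 1)‖ := by
      rw [D, norm_mul, norm_natCast_add_one]
    have h2 : ‖D v (n + 1)‖ = ((n : ℝ) + 2) * ‖v (n + 2)‖ := by
      rw [D, norm_mul, norm_natCast_add_one (n + 1)]
      push_cast; ring
    have h4 : ((n : ℝ) + 1) ≠ 0 := by positivity
    rw [h2, h1, hv (n + 1)]
    field_simp
  · have h5 : Tendsto (fun n : ℕ => ((n : ℝ) + 2) / ((n : ℝ) + 1)) atTop (nhds 1) := by
      have : ∀ n : ℕ, ((n : ℝ) + 2) / ((n : ℝ) + 1) = 1 + 1 / ((n : ℝ) + 1) := by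
        intro n
        have : ((n : ℝ) + 1) ≠ 0 := by positivity
        field_simp
        ring
      rw [show (nhds (1 : ℝ)) = nhds (1 + 0) by norm_num]
      exact Tendsto.congr (fun n => (this n).symm)
        (tendsto_const_nhds.add tendsto_one_div_add_atTop_nhds_zero_nat)
    have h6 : Tendsto (fun n => t (n + 1)) atTop (nhds 1) :=
      ht.comp (tendsto_add_atTop_nat 1)
    simpa using h5.mul h6

lemma P_of_ratio {v : ℕ → ℂ} {t : ℕ → ℝ}
    (hv : ∀ n, ‖v (n + 1)‖ = t n * ‖v n‖) (ht : Tendsto t atTop (nhds 1)) : P v :=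
  fun _ hr0 hr1 => summable_geom_aux hv ht hr0 hr1

lemma co_facts {a b c : ℂ} (hc : ∀ k : ℕ, c ≠ -(k : ℂ)) :
    P (co a b c) ∧ P (D (co a b c)) ∧ P (D (D (co a b c))) := by
  have hv : ∀ n, ‖co a b c (n + 1)‖ = ‖ratio a b c n‖ * ‖co a b c n‖ := by
    intro n; rw [co_rec hc n, norm_mul]; ring
  have ht : Tendsto (fun n => ‖ratio a b c n‖) atTop (nhds 1) := by
    simpa using (tendsto_ratio hc).norm
  obtain ⟨hv1, ht1⟩ := D_ratio_step hv ht
  obtain ⟨hv2, ht2⟩ := D_ratio_step hv1 ht1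
  exact ⟨P_of_ratio hv ht, P_of_ratio hv1 ht1, P_of_ratio hv2 ht2⟩


lemma summable_ps {v : ℕ → ℂ} (hP : P v) {z : ℂ} (hz : ‖z‖ < 1) :
    Summable (fun n => v n * z ^ n) := by
  apply Summable.of_norm
  have := hP ‖z‖ (norm_nonneg z) hz
  simpa [norm_mul, norm_pow] using this

lemma hasSum_ps {v : ℕ → ℂ} (hP : P v) {z : ℂ} (hz : ‖z‖ < 1) :
    HasSum (fun n => v n * z ^ n) (∑' n, v n * z ^ n) :=
  (summable_ps hP hz).hasSum

lemma hasDerivAt_ps {v : ℕ → ℂ} (hP : P v) (hPD : P (D v)) {z : ℂ} (hz : ‖z‖ < 1) :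
    HasDerivAt (fun y => ∑' n, v n * y ^ n) (∑' n, D v n * z ^ n) z := by
  set r : ℝ := (‖z‖ + 1) / 2 with hrdef
  have hz0 : 0 ≤ ‖z‖ := norm_nonneg z
  have hr0 : 0 < r := by rw [hrdef]; linarith
  have hr1 : r < 1 := by rw [hrdef]; linarith
  have hzr : ‖z‖ < r := by rw [hrdef]; linarith
  have hbd : Summable (fun n : ℕ => ‖v n‖ * ((n : ℝ) * r ^ (n - 1))) := by
    rw [← summable_nat_add_iff 1]
    have := hPD r hr0.le hr1
    apply Summable.congr this
    intro n
    simp only [D, norm_mul, norm_natCast_add_one, Nat.add_sub_cancel]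
    push_cast
    ring
  have hder : HasDerivAt (fun y : ℂ => ∑' n, v n * y ^ n)
      (∑' n, v n * ((n : ℂ) * z ^ (n - 1))) z := by
    have hbound : ∀ (n : ℕ) (y : ℂ), y ∈ Metric.ball (0 : ℂ) r →
        ‖v n * ((n : ℂ) * y ^ (n - 1))‖ ≤ ‖v n‖ * ((n : ℝ) * r ^ (n - 1)) := by
      intro n y hy
      rw [norm_mul, norm_mul, norm_pow]
      have hyr : ‖y‖ ≤ r := by
        rw [Metric.mem_ball, dist_zero_right] at hy; exact hy.le
      have hn : ‖((n : ℕ) : ℂ)‖ = (n : ℝ) := by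
        rw [show ((n : ℕ) : ℂ) = (((n : ℕ) : ℝ) : ℂ) by push_cast; ring, Complex.norm_real,
          Real.norm_eq_abs, _root_.abs_of_nonneg (by positivity)]
      rw [hn]
      gcongr
    have hsum0 : Summable (fun n : ℕ => v n * (0 : ℂ) ^ n) := by
      apply Summable.of_norm
      apply Summable.of_nonneg_of_le (fun n => norm_nonneg _) (fun n => ?_)
        (hP r hr0.le hr1)
      rw [norm_mul, norm_pow, norm_zero]
      gcongr
    exact hasDerivAt_tsum_of_isPreconnected hbd Metric.isOpen_ball
      (convex_ball (0 : ℂ) r).isPreconnected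
      (fun n y _ => (hasDerivAt_pow n y).const_mul (v n))
      hbound (Metric.mem_ball_self hr0) hsum0
      (by simpa [Metric.mem_ball, dist_zero_right] using hzr)
  convert hder using 1
  have hsum : Summable (fun n : ℕ => v n * ((n : ℂ) * z ^ (n - 1))) := by
    apply Summable.of_norm
    apply Summable.of_nonneg_of_le (fun n => norm_nonneg _) (fun n => ?_) hbd
    rw [norm_mul, norm_mul, norm_pow]
    have hn : ‖((n : ℕ) : ℂ)‖ = (n : ℝ) := by
      rw [show ((n : ℕ) : ℂ) = (((n : ℕ) : ℝ) : ℂ) by push_cast; ring, Complex.norm_real,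
        Real.norm_eq_abs, _root_.abs_of_nonneg (by positivity)]
    rw [hn]
    gcongr
  rw [hsum.tsum_eq_zero_add]
  simp only [Nat.cast_zero, zero_mul, mul_zero, zero_add]
  apply tsum_congr
  intro n
  simp only [D, Nat.add_sub_cancel]
  push_cast
  ring


lemma co_rec' {a b c : ℂ} (hc : ∀ k : ℕ, c ≠ -(k : ℂ)) (n : ℕ) :
    ((n : ℂ) + 1) * (c + n) * co a b c (n + 1) = (a + n) * (b + n) * co a b c n := by
  rw [co_rec hc n, ratio]
  have h2 := c_add_ne_zero hc n
  have h4 : ((n : ℂ) + 1) ≠ 0 := Nat.cast_add_one_ne_zero n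
  field_simp

lemma hyp_ode {a b c : ℂ} (hc : ∀ k : ℕ, c ≠ -(k : ℂ)) {z : ℂ} (hz : ‖z‖ < 1) :
    z * (1 - z) * (∑' n, D (D (co a b c)) n * z ^ n)
      + (c - (a + b + 1) * z) * (∑' n, D (co a b c) n * z ^ n)
      - a * b * (∑' n, co a b c n * z ^ n) = 0 := by
  obtain ⟨hP0, hP1, hP2⟩ := co_facts (a := a) (b := b) hc
  set u := co a b c with hu
  have h0 := hasSum_ps hP0 hz
  have h1 := hasSum_ps hP1 hz
  have h2 := hasSum_ps hP2 hz
  set F0 := ∑' n, u n * z ^ n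
  set F1 := ∑' n, D u n * z ^ n
  set F2 := ∑' n, D (D u) n * z ^ n
  have hzF1 : HasSum (fun n : ℕ => (n : ℂ) * u n * z ^ n) (F1 * z) := by
    have h := h1.mul_right z
    have e : (fun n : ℕ => D u n * z ^ n * z)
        = fun n : ℕ => ((n + 1 : ℕ) : ℂ) * u (n + 1) * z ^ (n + 1) := by
      funext n; simp only [D]; push_cast; ring
    rw [e] at h
    have h' := (hasSum_nat_add_iff (f := fun n : ℕ => (n : ℂ) * u n * z ^ n) 1).mp h
    simpa using h'
  have hzF2 : HasSum (fun n : ℕ => (n : ℂ) * ((n : ℂ) + 1) * u (n + 1) * z ^ n) (F2 * z) := by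
    have h := h2.mul_right z
    have e : (fun n : ℕ => D (D u) n * z ^ n * z)
        = fun n : ℕ => ((n + 1 : ℕ) : ℂ) * (((n + 1 : ℕ) : ℂ) + 1) * u ((n + 1) + 1) * z ^ (n + 1) := by
      funext n; simp only [D]; push_cast; ring
    rw [e] at h
    have h' := (hasSum_nat_add_iff
      (f := fun n : ℕ => (n : ℂ) * ((n : ℂ) + 1) * u (n + 1) * z ^ n) 1).mp h
    simpa using h'
  have hz2F2 : HasSum (fun n : ℕ => (n : ℂ) * ((n : ℂ) - 1) * u n * z ^ n) (F2 * z ^ 2) := by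
    have h := h2.mul_right (z ^ 2)
    have e : (fun n : ℕ => D (D u) n * z ^ n * z ^ 2)
        = fun n : ℕ => ((n + 2 : ℕ) : ℂ) * (((n + 2 : ℕ) : ℂ) - 1) * u (n + 2) * z ^ (n + 2) := by
      funext n; simp only [D]; push_cast; ring
    rw [e] at h
    have h' := (hasSum_nat_add_iff
      (f := fun n : ℕ => (n : ℂ) * ((n : ℂ) - 1) * u n * z ^ n) 2).mp h
    simpa [Finset.sum_range_succ] using h'
  have hrec : ∀ n : ℕ, ((n : ℂ) + 1) * (c + n) * u (n + 1) = (a + n) * (b + n) * u n :=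
    fun n => co_rec' hc n
  have Hfinal := ((hzF2.sub hz2F2).add ((h1.mul_left c).sub (hzF1.mul_left (a + b + 1)))).sub
    (h0.mul_left (a * b))
  have hterm : (fun n : ℕ => ((n : ℂ) * ((n : ℂ) + 1) * u (n + 1) * z ^ n
      - (n : ℂ) * ((n : ℂ) - 1) * u n * z ^ n)
      + (c * (D u n * z ^ n) - (a + b + 1) * ((n : ℂ) * u n * z ^ n))
      - a * b * (u n * z ^ n)) = fun _ => 0 := by
    funext n
    simp only [D]
    linear_combination (z ^ n) * hrec n
  rw [hterm] at Hfinal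
  have hS : F2 * z - F2 * z ^ 2 + (c * F1 - (a + b + 1) * (F1 * z)) - a * b * F0 = 0 :=
    Hfinal.unique hasSum_zero
  linear_combination hS


def F0 (a b c : ℂ) (z : ℂ) : ℂ := ∑' n, co a b c n * z ^ n
def F1 (a b c : ℂ) (z : ℂ) : ℂ := ∑' n, D (co a b c) n * z ^ n
def F2 (a b c : ℂ) (z : ℂ) : ℂ := ∑' n, D (D (co a b c)) n * z ^ n

lemma hyp_eq (a b c z : ℂ) : hyp a b c z = F0 a b c z := rfl

lemma hasDerivAt_F0 {a b c : ℂ} (hc : ∀ k : ℕ, c ≠ -(k : ℂ)) {z : ℂ} (hz : ‖z‖ < 1) :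
    HasDerivAt (F0 a b c) (F1 a b c z) z := by
  obtain ⟨hP0, hP1, _⟩ := co_facts (a := a) (b := b) hc
  exact hasDerivAt_ps hP0 hP1 hz

lemma hasDerivAt_F1 {a b c : ℂ} (hc : ∀ k : ℕ, c ≠ -(k : ℂ)) {z : ℂ} (hz : ‖z‖ < 1) :
    HasDerivAt (F1 a b c) (F2 a b c z) z := by
  obtain ⟨_, hP1, hP2⟩ := co_facts (a := a) (b := b) hc
  exact hasDerivAt_ps hP1 hP2 hz

lemma hyp_ode' {a b c : ℂ} (hc : ∀ k : ℕ, c ≠ -(k : ℂ)) {z : ℂ} (hz : ‖z‖ < 1) :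
    z * (1 - z) * F2 a b c z + (c - (a + b + 1) * z) * F1 a b c z
      - a * b * F0 a b c z = 0 := hyp_ode hc hz

def Gfun (a b c μ σ : ℂ) (y : ℂ) : ℂ :=
  Complex.sinh (y / 2) ^ ((μ - 1) / 2) * Complex.cosh (y / 2) ^ (-((σ - 1) / 2)) *
    F0 a b c (-(Complex.sinh (y / 2) ^ 2))

def G1fun (a b c μ σ : ℂ) (y : ℂ) : ℂ :=
  ((μ - 1) / 2 * Complex.sinh (y / 2) ^ ((μ - 1) / 2 - 1) * (Complex.cosh (y / 2) / 2)) *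
      Complex.cosh (y / 2) ^ (-((σ - 1) / 2)) * F0 a b c (-(Complex.sinh (y / 2) ^ 2))
  + Complex.sinh (y / 2) ^ ((μ - 1) / 2) *
      ((-((σ - 1) / 2)) * Complex.cosh (y / 2) ^ (-((σ - 1) / 2) - 1) *
        (Complex.sinh (y / 2) / 2)) * F0 a b c (-(Complex.sinh (y / 2) ^ 2))
  + Complex.sinh (y / 2) ^ ((μ - 1) / 2) * Complex.cosh (y / 2) ^ (-((σ - 1) / 2)) *
      (F1 a b c (-(Complex.sinh (y / 2) ^ 2)) *
        (-(Complex.sinh (y / 2) * Complex.cosh (y / 2))))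

def Pefun (a b c μ σ : ℂ) (y : ℂ) : ℂ :=
  ((μ - 1) / 2) / 2 * Complex.cosh (y / 2) ^ 2 * F0 a b c (-(Complex.sinh (y / 2) ^ 2))
  + (-((σ - 1) / 2)) / 2 * Complex.sinh (y / 2) ^ 2 * F0 a b c (-(Complex.sinh (y / 2) ^ 2))
  - Complex.sinh (y / 2) ^ 2 * Complex.cosh (y / 2) ^ 2 *
      F1 a b c (-(Complex.sinh (y / 2) ^ 2))

def Refun (a b c μ σ : ℂ) (y : ℂ) : ℂ :=
  ((μ - 1) / 2 + -((σ - 1) / 2)) / 2 * F0 a b c (-(Complex.sinh (y / 2) ^ 2))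
  - (((μ - 1) / 2) / 2 * Complex.cosh (y / 2) ^ 2
      + (-((σ - 1) / 2)) / 2 * Complex.sinh (y / 2) ^ 2
      + Complex.cosh (y / 2) ^ 2 + Complex.sinh (y / 2) ^ 2) *
        F1 a b c (-(Complex.sinh (y / 2) ^ 2))
  + Complex.sinh (y / 2) ^ 2 * Complex.cosh (y / 2) ^ 2 *
      F2 a b c (-(Complex.sinh (y / 2) ^ 2))

def G2fun (a b c μ σ : ℂ) (y : ℂ) : ℂ :=
  Complex.sinh (y / 2) ^ ((μ - 1) / 2 - 2) * Complex.cosh (y / 2) ^ (-((σ - 1) / 2) - 2) *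
    (((μ - 1) / 2 - 1) / 2 * Complex.cosh (y / 2) ^ 2 * Pefun a b c μ σ y
      + (-((σ - 1) / 2) - 1) / 2 * Complex.sinh (y / 2) ^ 2 * Pefun a b c μ σ y
      + Complex.sinh (y / 2) ^ 2 * Complex.cosh (y / 2) ^ 2 * Refun a b c μ σ y)

lemma hasDerivAt_sinh_half (y : ℂ) :
    HasDerivAt (fun y : ℂ => Complex.sinh (y / 2)) (Complex.cosh (y / 2) / 2) y := by
  have h := (Complex.hasDerivAt_sinh (y / 2)).comp y ((hasDerivAt_id y).div_const 2)
  refine h.congr_deriv ?_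
  ring

lemma hasDerivAt_cosh_half (y : ℂ) :
    HasDerivAt (fun y : ℂ => Complex.cosh (y / 2)) (Complex.sinh (y / 2) / 2) y := by
  have h := (Complex.hasDerivAt_cosh (y / 2)).comp y ((hasDerivAt_id y).div_const 2)
  refine h.congr_deriv ?_
  ring

lemma hasDerivAt_zfun (y : ℂ) :
    HasDerivAt (fun y : ℂ => -(Complex.sinh (y / 2) ^ 2))
      (-(Complex.sinh (y / 2) * Complex.cosh (y / 2))) y := by
  have h := ((hasDerivAt_sinh_half y).pow 2).neg
  refine h.congr_deriv ?_
  push_cast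
  ring

lemma hasDerivAt_Gfun {a b c μ σ : ℂ} (hc : ∀ k : ℕ, c ≠ -(k : ℂ)) {y : ℂ}
    (hs : Complex.sinh (y / 2) ∈ Complex.slitPlane)
    (hco : Complex.cosh (y / 2) ∈ Complex.slitPlane)
    (hn : ‖-(Complex.sinh (y / 2) ^ 2)‖ < 1) :
    HasDerivAt (Gfun a b c μ σ) (G1fun a b c μ σ y) y := by
  have hA := (hasDerivAt_sinh_half y).cpow_const (c := (μ - 1) / 2) hs
  have hB := (hasDerivAt_cosh_half y).cpow_const (c := -((σ - 1) / 2)) hco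
  have hF := (hasDerivAt_F0 (a := a) (b := b) hc hn).comp y (hasDerivAt_zfun y)
  have H := (hA.mul hB).mul hF
  refine H.congr_deriv ?_
  unfold G1fun
  simp only [Function.comp, Pi.mul_apply]
  ring

lemma hasDerivAt_G1fun {a b c μ σ : ℂ} (hc : ∀ k : ℕ, c ≠ -(k : ℂ)) {y : ℂ}
    (hs : Complex.sinh (y / 2) ∈ Complex.slitPlane)
    (hco : Complex.cosh (y / 2) ∈ Complex.slitPlane)
    (hn : ‖-(Complex.sinh (y / 2) ^ 2)‖ < 1)
    (hS0 : Complex.sinh (y / 2) ≠ 0) (hC0 : Complex.cosh (y / 2) ≠ 0) :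
    HasDerivAt (G1fun a b c μ σ) (G2fun a b c μ σ y) y := by
  have hsinh := hasDerivAt_sinh_half y
  have hcosh := hasDerivAt_cosh_half y
  have hzd := hasDerivAt_zfun y
  have hA := hsinh.cpow_const (c := (μ - 1) / 2) hs
  have hB := hcosh.cpow_const (c := -((σ - 1) / 2)) hco
  have hA1 := hsinh.cpow_const (c := (μ - 1) / 2 - 1) hs
  have hB1 := hcosh.cpow_const (c := -((σ - 1) / 2) - 1) hco
  have hF0c := (hasDerivAt_F0 (a := a) (b := b) hc hn).comp y hzd
  have hF1c := (hasDerivAt_F1 (a := a) (b := b) hc hn).comp y hzd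
  have h14 := (((hA1.const_mul ((μ - 1) / 2)).mul (hcosh.div_const 2)).mul hB).mul hF0c
  have h24 := (hA.mul ((hB1.const_mul (-((σ - 1) / 2))).mul (hsinh.div_const 2))).mul hF0c
  have h32 := (hA.mul hB).mul (hF1c.mul ((hsinh.mul hcosh).neg))
  have H := (h14.add h24).add h32
  refine H.congr_deriv ?_
  unfold G2fun Pefun Refun
  simp only [Function.comp, Pi.mul_apply, Pi.neg_apply]
  rw [show (μ - 1) / 2 - 1 - 1 = (μ - 1) / 2 - 2 from by ring,
    show -((σ - 1) / 2) - 1 - 1 = -((σ - 1) / 2) - 2 from by ring]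
  have es1 : Complex.sinh (y / 2) ^ ((μ - 1) / 2 - 1)
      = Complex.sinh (y / 2) ^ ((μ - 1) / 2 - 2) * Complex.sinh (y / 2) := by
    rw [show (μ - 1) / 2 - 1 = (μ - 1) / 2 - 2 + 1 from by ring,
      Complex.cpow_add _ _ hS0, Complex.cpow_one]
  have es0 : Complex.sinh (y / 2) ^ ((μ - 1) / 2)
      = Complex.sinh (y / 2) ^ ((μ - 1) / 2 - 2) * Complex.sinh (y / 2) ^ (2 : ℕ) := by
    conv_lhs => rw [show (μ - 1) / 2 = (μ - 1) / 2 - 2 + 2 from by ring,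
      Complex.cpow_add _ _ hS0, Complex.cpow_two]
  have ec1 : Complex.cosh (y / 2) ^ (-((σ - 1) / 2) - 1)
      = Complex.cosh (y / 2) ^ (-((σ - 1) / 2) - 2) * Complex.cosh (y / 2) := by
    rw [show -((σ - 1) / 2) - 1 = -((σ - 1) / 2) - 2 + 1 from by ring,
      Complex.cpow_add _ _ hC0, Complex.cpow_one]
  have ec0 : Complex.cosh (y / 2) ^ (-((σ - 1) / 2))
      = Complex.cosh (y / 2) ^ (-((σ - 1) / 2) - 2) * Complex.cosh (y / 2) ^ (2 : ℕ) := by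
    conv_lhs => rw [show -((σ - 1) / 2) = -((σ - 1) / 2) - 2 + 2 from by ring,
      Complex.cpow_add _ _ hC0, Complex.cpow_two]
  rw [es1, es0, ec1, ec0]
  ring

end Stmt17Aux


namespace Stmt17Aux

lemma point_facts {t : ℝ} (h1 : 0 < t) (h2 : t < 2 * Real.arsinh 1) :
    Complex.sinh ((t : ℂ) / 2) ∈ Complex.slitPlane ∧
    Complex.cosh ((t : ℂ) / 2) ∈ Complex.slitPlane ∧
    ‖-(Complex.sinh ((t : ℂ) / 2) ^ 2)‖ < 1 ∧
    Complex.sinh ((t : ℂ) / 2) ≠ 0 ∧ Complex.cosh ((t : ℂ) / 2) ≠ 0 := by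
  have hs_pos : 0 < Real.sinh (t / 2) := Real.sinh_pos_iff.2 (by linarith)
  have hc_pos : 0 < Real.cosh (t / 2) := Real.cosh_pos _
  have hslt : Real.sinh (t / 2) < 1 := by
    have h : t / 2 < Real.arsinh 1 := by linarith
    calc Real.sinh (t / 2) < Real.sinh (Real.arsinh 1) := Real.sinh_lt_sinh.2 h
      _ = 1 := Real.sinh_arsinh 1
  have hcs : Complex.sinh ((t : ℂ) / 2) = ((Real.sinh (t / 2) : ℝ) : ℂ) := by
    rw [Complex.ofReal_sinh]; norm_cast
  have hcc : Complex.cosh ((t : ℂ) / 2) = ((Real.cosh (t / 2) : ℝ) : ℂ) := by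
    rw [Complex.ofReal_cosh]; norm_cast
  refine ⟨?_, ?_, ?_, ?_, ?_⟩
  · rw [hcs]; exact Complex.ofReal_mem_slitPlane.2 hs_pos
  · rw [hcc]; exact Complex.ofReal_mem_slitPlane.2 hc_pos
  · rw [hcs, norm_neg, show ((Real.sinh (t / 2) : ℝ) : ℂ) ^ 2
        = ((Real.sinh (t / 2) ^ 2 : ℝ) : ℂ) from by push_cast; ring,
      Complex.norm_real, Real.norm_eq_abs, _root_.abs_of_nonneg (by positivity)]
    nlinarith
  · rw [hcs]; exact_mod_cast hs_pos.ne'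
  · rw [hcc]; exact_mod_cast hc_pos.ne'

end Stmt17Aux


/-- `η₁` solves `η₁'' + (λ − q(x))η₁ = 0` on `(0, 2 arsinh 1)`, where
`q = q* − ((σ−μ)/4)²`. -/
theorem stmt17 (μ σ lam : ℂ) (hc : ∀ k : ℕ, μ / 2 ≠ -(k : ℂ)) (w : ℂ) (hw : w ^ 2 = lam)
    (a b c : ℂ) (ha : a = -(σ - μ) / 4 + Complex.I * w)
    (hb : b = -(σ - μ) / 4 - Complex.I * w) (hc' : c = μ / 2) :
    ∀ x : ℝ, 0 < x → x < 2 * Real.arsinh 1 →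
      deriv (deriv (eta1 a b c μ σ)) x +
        (lam - (qstar σ μ x - ((σ - μ) / 4) ^ 2)) * eta1 a b c μ σ x = 0 := by
  intro x hx1 hx2
  have hcc : ∀ k : ℕ, c ≠ -(k : ℂ) := by intro k; rw [hc']; exact hc k
  have heta : eta1 a b c μ σ = fun t : ℝ => Stmt17Aux.Gfun a b c μ σ ↑t := by
    funext t
    unfold eta1 Stmt17Aux.Gfun
    rw [Stmt17Aux.hyp_eq]
    have h1 : ((Real.sinh (t / 2) : ℝ) : ℂ) = Complex.sinh ((t : ℂ) / 2) := by
      rw [Complex.ofReal_sinh]; norm_cast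
    have h2 : ((Real.cosh (t / 2) : ℝ) : ℂ) = Complex.cosh ((t : ℂ) / 2) := by
      rw [Complex.ofReal_cosh]; norm_cast
    rw [show ((Real.sinh (t / 2) ^ 2 : ℝ) : ℂ) = ((Real.sinh (t / 2) : ℝ) : ℂ) ^ 2 from by
      push_cast; ring]
    rw [h1, h2]
  obtain ⟨f1, f2, f3, f4, f5⟩ := Stmt17Aux.point_facts hx1 hx2
  have hder1 : ∀ t ∈ Set.Ioo (0 : ℝ) (2 * Real.arsinh 1),
      HasDerivAt (eta1 a b c μ σ) (Stmt17Aux.G1fun a b c μ σ ↑t) t := by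
    intro t ht
    obtain ⟨g1, g2, g3, _, _⟩ := Stmt17Aux.point_facts ht.1 ht.2
    rw [heta]
    exact (Stmt17Aux.hasDerivAt_Gfun hcc g1 g2 g3).comp_ofReal
  have hev : deriv (eta1 a b c μ σ) =ᶠ[nhds x]
      fun t : ℝ => Stmt17Aux.G1fun a b c μ σ ↑t := by
    filter_upwards [isOpen_Ioo.mem_nhds (show x ∈ Set.Ioo (0 : ℝ) (2 * Real.arsinh 1) from
      ⟨hx1, hx2⟩)] with t ht
    exact (hder1 t ht).deriv
  rw [hev.deriv_eq]
  have hder2 : HasDerivAt (fun t : ℝ => Stmt17Aux.G1fun a b c μ σ ↑t)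
      (Stmt17Aux.G2fun a b c μ σ ↑x) x :=
    (Stmt17Aux.hasDerivAt_G1fun hcc f1 f2 f3 f4 f5).comp_ofReal
  rw [hder2.deriv]
  simp only [heta]
  -- now pure algebra
  set S := Complex.sinh ((x : ℂ) / 2) with hSdef
  set C := Complex.cosh ((x : ℂ) / 2) with hCdef
  have hC2 : C ^ 2 = 1 + S ^ 2 := by rw [hCdef, hSdef, Complex.cosh_sq]; ring
  have hode := Stmt17Aux.hyp_ode' (a := a) (b := b) hcc (z := -(S ^ 2)) f3
  have hq : S ^ 2 * C ^ 2 * qstar σ μ x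
      = (μ - 1) * (μ - 3) / 16 * (C ^ 2 * C ^ 2)
        - (μ * (σ - 2) + 1) / 8 * (S ^ 2 * C ^ 2)
        + (σ + 1) * (σ - 1) / 16 * (S ^ 2 * S ^ 2) := by
    unfold qstar
    have h1 : S = ((Real.sinh (x / 2) : ℝ) : ℂ) := by
      rw [hSdef, Complex.ofReal_sinh]; norm_cast
    have h2 : C = ((Real.cosh (x / 2) : ℝ) : ℂ) := by
      rw [hCdef, Complex.ofReal_cosh]; norm_cast
    have htanh : ((Real.tanh (x / 2) : ℝ) : ℂ) = S / C := by
      rw [Real.tanh_eq_sinh_div_cosh, Complex.ofReal_div, ← h1, ← h2]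
    rw [htanh]
    field_simp [f4, f5]
  have hab : a * b = ((σ - μ) / 4) ^ 2 + w ^ 2 := by
    rw [ha, hb]
    linear_combination (-(w ^ 2)) * Complex.I_sq
  have hsum : a + b = -(σ - μ) / 2 := by rw [ha, hb]; ring
  rw [← hw]
  have hode' : (-(S ^ 2)) * (1 - -(S ^ 2)) * Stmt17Aux.F2 a b c (-(S ^ 2))
      + (μ / 2 - (-(σ - μ) / 2 + 1) * (-(S ^ 2))) * Stmt17Aux.F1 a b c (-(S ^ 2))
      - (((σ - μ) / 4) ^ 2 + w ^ 2) * Stmt17Aux.F0 a b c (-(S ^ 2)) = 0 := by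
    rw [← hc', ← hab, ← hsum]
    exact hode
  unfold Stmt17Aux.G2fun Stmt17Aux.Pefun Stmt17Aux.Refun Stmt17Aux.Gfun
  rw [← hSdef, ← hCdef]
  have hS0 : S ≠ 0 := f4
  have hC0 : C ≠ 0 := f5
  have es0 : S ^ ((μ - 1) / 2) = S ^ ((μ - 1) / 2 - 2) * S ^ (2 : ℕ) := by
    conv_lhs => rw [show (μ - 1) / 2 = (μ - 1) / 2 - 2 + 2 from by ring,
      Complex.cpow_add _ _ hS0, Complex.cpow_two]
  have ec0 : C ^ (-((σ - 1) / 2)) = C ^ (-((σ - 1) / 2) - 2) * C ^ (2 : ℕ) := by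
    conv_lhs => rw [show -((σ - 1) / 2) = -((σ - 1) / 2) - 2 + 2 from by ring,
      Complex.cpow_add _ _ hC0, Complex.cpow_two]
  rw [es0, ec0]
  set A := S ^ ((μ - 1) / 2 - 2) with hAdef
  set B := C ^ (-((σ - 1) / 2) - 2) with hBdef
  set f0 := Stmt17Aux.F0 a b c (-(S ^ 2)) with hf0def
  set f1v := Stmt17Aux.F1 a b c (-(S ^ 2)) with hf1def
  set f2v := Stmt17Aux.F2 a b c (-(S ^ 2)) with hf2def
  linear_combination
    (A * B * (-(S ^ 2 * C ^ 2))) * hode'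
    + (A * B * (S ^ 2 * S ^ 2 * C ^ 2 * f2v - μ / 2 * (S ^ 2 * C ^ 2) * f1v)) * hC2
    + (A * B * (-f0)) * hq
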